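/- With c_1 = 1, the vector Q^{-1} v, where v = (c_2, ..., c_n)^T, equals (m_1, -m_2, m_3, ..., (-1)^{n-2} m_{n-1})^T, i.e. its k-th entry is (-1)^{k+1} m_k for 1 ≤ k ≤ n-1. -/

import Mathlib

open Matrix

noncomputable def M0 (c : ℕ → ℂ) (n : ℕ) : Matrix (Fin n) (Fin n) ℂ :=
  fun i j => if (j : ℕ) ≤ (i : ℕ) + 1 then c ((i : ℕ) + 2 - (j : ℕ)) else 0

noncomputable def pm (c : ℕ → ℂ) (r : ℕ) : ℂ := (M0 c r).det

noncomputable def Qmat (c : ℕ → ℂ) (s : ℕ) : Matrix (Fin s) (Fin s) ℂ :=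
  fun i j => if (j : ℕ) ≤ (i : ℕ) then c ((i : ℕ) + 1 - (j : ℕ)) else 0

lemma succAbove_val (r : ℕ) (j : Fin (r+1)) (k : Fin r) :
    (j.succAbove k : ℕ) = if (k:ℕ) < j then (k:ℕ) else (k:ℕ)+1 := by
  rw [Fin.succAbove]
  split_ifs with h1 h2 h2 <;> simp_all [Fin.lt_def]

lemma det_Qmat (c : ℕ → ℂ) (hc1 : c 1 = 1) (s : ℕ) : (Qmat c s).det = 1 := by
  have h : (Qmat c s).BlockTriangular OrderDual.toDual := by
    intro i j hij
    have hij' : (i:ℕ) < (j:ℕ) := hij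
    simp only [Qmat]
    rw [if_neg (by omega)]
  rw [Matrix.det_of_lowerTriangular _ h]
  have h1 : ∀ i : ℕ, i + 1 - i = 1 := fun i => by omega
  simp [Qmat, h1, hc1]

lemma minor_eq (c : ℕ → ℂ) (hc1 : c 1 = 1) (r : ℕ) (j : Fin (r+1)) :
    ((M0 c (r+1)).submatrix Fin.castSucc j.succAbove).det = pm c j := by
  have hj : (j:ℕ) ≤ r := Fin.is_le j
  let e : Fin (j:ℕ) ⊕ Fin (r - (j:ℕ)) ≃ Fin r :=
    (finSumFinEquiv).trans (finCongr (by omega))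
  have he1 : ∀ b : Fin (j:ℕ), ((e (Sum.inl b)) : ℕ) = (b:ℕ) := by
    intro b; simp [e]
  have he2 : ∀ a : Fin (r - (j:ℕ)), ((e (Sum.inr a)) : ℕ) = (j:ℕ) + (a:ℕ) := by
    intro a; simp [e]
  rw [← Matrix.det_submatrix_equiv_self e]
  have hmat : (((M0 c (r+1)).submatrix Fin.castSucc j.succAbove).submatrix e e)
      = Matrix.fromBlocks (M0 c j)
          0
          (fun (a : Fin (r - (j:ℕ))) (b : Fin (j:ℕ)) =>
            if (b:ℕ) ≤ (j:ℕ) + (a:ℕ) + 1 then c ((j:ℕ) + (a:ℕ) + 2 - (b:ℕ)) else 0)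
          (Qmat c (r - j)) := by
    ext i l
    rcases i with a | a <;> rcases l with b | b <;>
      simp only [Matrix.submatrix_apply, Matrix.fromBlocks_apply₁₁, Matrix.fromBlocks_apply₁₂,
        Matrix.fromBlocks_apply₂₁, Matrix.fromBlocks_apply₂₂,
        M0, Qmat, Matrix.zero_apply, Fin.coe_castSucc, Matrix.fromBlocks, Matrix.of_apply,
        Sum.elim_inl, Sum.elim_inr] <;>
      rw [succAbove_val] <;>
      simp only [he1, he2] <;>
      split_ifs <;>
      first
        | rfl
        | omega
        | (congr 1; omega)
  rw [hmat]; refine (Matrix.det_fromBlocks_zero₁₂ _ _ _).trans ?_; rw [det_Qmat c hc1, mul_one]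
  rfl

lemma pm_rec (c : ℕ → ℂ) (hc1 : c 1 = 1) (r : ℕ) :
    pm c (r+1) = ∑ j : Fin (r+1), (-1:ℂ) ^ (r + (j:ℕ)) * c (r + 2 - (j:ℕ)) * pm c (j:ℕ) := by
  rw [pm, det_succ_row (M0 c (r+1)) (Fin.last r)]
  refine Finset.sum_congr rfl fun j _ => ?_
  simp only [M0, Fin.val_last, Fin.succAbove_last]
  rw [minor_eq c hc1 r j, if_pos (by have := j.is_le; omega)]

lemma key (c : ℕ → ℂ) (hc1 : c 1 = 1) (i : ℕ) :
    ∑ j ∈ Finset.range (i+1), c (i+1-j) * ((-1:ℂ)^j * pm c (j+1)) = c (i+2) := by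
  have h0 : pm c 0 = 1 := by simp [pm]
  have hr := pm_rec c hc1 i
  rw [Fin.sum_univ_eq_sum_range (fun j => (-1:ℂ)^(i+j) * c (i+2-j) * pm c j) (i+1),
    Finset.sum_range_succ'] at hr
  have hA : ∑ j ∈ Finset.range i, (-1:ℂ)^(i+(j+1)) * c (i+2-(j+1)) * pm c (j+1)
      = (-1:ℂ)^(i+1) * ∑ j ∈ Finset.range i, c (i+1-j) * ((-1:ℂ)^j * pm c (j+1)) := by
    rw [Finset.mul_sum]
    refine Finset.sum_congr rfl fun j hj => ?_
    rw [show i+2-(j+1) = i+1-j from by omega, show i+(j+1) = (i+1)+j from by omega, pow_add]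
    ring
  rw [hA] at hr
  simp only [h0, Nat.add_zero, Nat.sub_zero, mul_one] at hr
  rw [Finset.sum_range_succ, show i+1-i = 1 from by omega, hc1, one_mul, hr]
  have h2 : (-1:ℂ)^i * (-1:ℂ)^(i+1) = -1 := by
    rw [← pow_add, show i+(i+1) = 2*i+1 from by omega, pow_succ, pow_mul]
    norm_num
  have h3 : (-1:ℂ)^i * (-1:ℂ)^i = 1 := by
    rw [← pow_add, show i+i = 2*i from by omega, pow_mul]
    norm_num
  calc (∑ j ∈ Finset.range i, c (i+1-j) * ((-1:ℂ)^j * pm c (j+1)))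
        + (-1:ℂ)^i * ((-1:ℂ)^(i+1) * ∑ j ∈ Finset.range i, c (i+1-j) * ((-1:ℂ)^j * pm c (j+1))
            + (-1:ℂ)^i * c (i+2))
      = (1 + (-1:ℂ)^i * (-1:ℂ)^(i+1)) * (∑ j ∈ Finset.range i, c (i+1-j) * ((-1:ℂ)^j * pm c (j+1)))
          + ((-1:ℂ)^i * (-1:ℂ)^i) * c (i+2) := by ring
    _ = c (i+2) := by rw [h2, h3]; ring

/-- Property 2: the k-th entry (1-based) of `Q⁻¹ v`, `v = (c 2, ..., c n)`, is
`(-1)^(k+1) m_k`; 0-based: entry k is `(-1)^k m_(k+1)`. -/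
theorem stmt1 (n : ℕ) (hn : 2 ≤ n) (c : ℕ → ℂ) (hc1 : c 1 = 1) :
    ∀ k : Fin (n - 1),
      ((Qmat c (n - 1))⁻¹ *ᵥ fun i : Fin (n - 1) => c ((i : ℕ) + 2)) k
        = (-1 : ℂ) ^ (k : ℕ) * pm c ((k : ℕ) + 1) := by
  intro k
  set s := n - 1 with hs
  set w : Fin s → ℂ := fun k => (-1:ℂ)^(k:ℕ) * pm c ((k:ℕ)+1) with hw
  have hQw : Qmat c s *ᵥ w = fun i : Fin s => c ((i:ℕ)+2) := by
    funext i
    simp only [Matrix.mulVec, dotProduct, Qmat, hw]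
    rw [Fin.sum_univ_eq_sum_range
      (fun j => (if j ≤ (i:ℕ) then c ((i:ℕ)+1-j) else 0) * ((-1:ℂ)^j * pm c (j+1))) s]
    rw [← Finset.sum_subset (Finset.range_subset_range.mpr (show (i:ℕ)+1 ≤ s from i.is_lt))
      (fun x _ hx => by
        rw [if_neg (by simp at hx ⊢; omega), zero_mul])]
    rw [← key c hc1 (i:ℕ)]
    refine Finset.sum_congr rfl fun j hj => ?_
    rw [if_pos (by simp at hj; omega)]
  have hdet : IsUnit (Qmat c s).det := by rw [det_Qmat c hc1]; exact isUnit_one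
  have : (Qmat c s)⁻¹ *ᵥ (fun i : Fin s => c ((i:ℕ)+2)) = w := by
    rw [← hQw, Matrix.mulVec_mulVec, Matrix.nonsing_inv_mul _ hdet, Matrix.one_mulVec]
  rw [this]
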